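/- Let $\Gamma$ be a $(Y,Y')$-distance-biregular graph with $k' \ge 3$ and $D = 3$, and suppose $\Gamma$ is $2$-$Y$-homogeneous. Then $b_1 = c_2$, i.e., $|\Gamma_2(x)| = \deg(x)$ for every $x \in Y$. -/
import Mathlib


open SimpleGraph Set

/-- A `(Y,Y')`-distance-biregular graph: a finite connected bipartite graph in which
every vertex is distance-regularized, and vertices in the same color class share the
same intersection numbers (`c`, `b` for class `Y` and `c'`, `b'` for class `Y'`),
while the two color classes have different intersection arrays.
`D` (resp. `D'`) is the common eccentricity of vertices in `Y` (resp. `Y'`). -/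
structure DBRG (V : Type) [Fintype V] where
  G : SimpleGraph V
  conn : G.Connected
  Y : Finset V
  Y' : Finset V
  Yne : Y.Nonempty
  Y'ne : Y'.Nonempty
  cover : ∀ v, v ∈ Y ∨ v ∈ Y'
  disj : ∀ v, ¬(v ∈ Y ∧ v ∈ Y')
  bip : ∀ u v, G.Adj u v → (u ∈ Y ↔ v ∈ Y')
  D : ℕ
  D' : ℕ
  eccY : ∀ x ∈ Y, (∃ y, G.dist x y = D) ∧ ∀ y, G.dist x y ≤ D
  eccY' : ∀ x ∈ Y', (∃ y, G.dist x y = D') ∧ ∀ y, G.dist x y ≤ D'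
  c : ℕ → ℕ
  b : ℕ → ℕ
  c' : ℕ → ℕ
  b' : ℕ → ℕ
  hc : ∀ i, 1 ≤ i → ∀ x ∈ Y, ∀ z, G.dist x z = i →
    {w | G.Adj z w ∧ G.dist x w = i - 1}.ncard = c i
  hb : ∀ i, ∀ x ∈ Y, ∀ z, G.dist x z = i →
    {w | G.Adj z w ∧ G.dist x w = i + 1}.ncard = b i
  hc' : ∀ i, 1 ≤ i → ∀ x ∈ Y', ∀ z, G.dist x z = i →
    {w | G.Adj z w ∧ G.dist x w = i - 1}.ncard = c' i
  hb' : ∀ i, ∀ x ∈ Y', ∀ z, G.dist x z = i →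
    {w | G.Adj z w ∧ G.dist x w = i + 1}.ncard = b' i
  c0 : c 0 = 0
  c'0 : c' 0 = 0
  nonreg : ¬ (∀ i, c i = c' i ∧ b i = b' i)

/-- `Γ` is `2`-`Y`-homogeneous with parameters `γ i`: for all `1 ≤ i ≤ D - 1` and all
`x ∈ Y`, `y ∈ Γ₂(x)`, `z ∈ Γ_{i,i}(x,y)`, the number of common neighbours of `x` and `y`
at distance `i - 1` from `z` equals `γ i` (independently of `x`, `y`, `z`). -/
def DBRG.TwoYHom {V : Type} [Fintype V] (Γ : DBRG V) (γ : ℕ → ℕ) : Prop :=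
  ∀ i, 1 ≤ i → i ≤ Γ.D - 1 → ∀ x ∈ Γ.Y, ∀ y, Γ.G.dist x y = 2 →
    ∀ z, Γ.G.dist x z = i → Γ.G.dist y z = i →
      {w | Γ.G.dist z w = i - 1 ∧ Γ.G.Adj x w ∧ Γ.G.Adj y w}.ncard = γ i

lemma key_alg (b0 b1 c2 e q g : ℤ)
    (h1 : q*g = c2*(b1-1))
    (h2 : q*(g*(g-1)) = (c2*(c2-1))*(e-2))
    (h3 : (b0*b0 - b0)*(e-1) = (q+1)*(c2*c2 - c2))
    (h4 : c2*(q+1) = b0*b1)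
    (hb1 : 2 ≤ b1) (hc2 : 1 ≤ c2) (hb0 : c2+1 ≤ b0) : b1 = c2 := by
  have hb0ne : (b0 : ℤ) ≠ 0 := by linarith
  have s1 : (b0-1)*(e-1) = b1*(c2-1) := by
    apply mul_left_cancel₀ hb0ne
    linear_combination h3 + (c2-1)*h4
  have s3 : (c2*(b1-1))^2 - q*(c2*(b1-1)) = q*((c2*(c2-1))*(e-2)) := by
    linear_combination q*h2 - (c2*(b1-1)+q*g-q)*h1
  have s4 : (b0-1)*((c2*(b1-1))^2 - q*(c2*(b1-1))) = q*(c2*(c2-1))*(b1*(c2-1)-(b0-1)) := by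
    linear_combination (b0-1)*s3 + q*c2*(c2-1)*s1
  have hqc2 : q*c2 = b0*b1 - c2 := by linear_combination h4
  have key : (b1-c2)*(b1*(b0-c2)^2) = 0 := by
    linear_combination (-1)*s4 - (c2 - 2*b1*c2 + b1*c2^2 - b0*c2 + b0*b1)*hqc2
  have hpos : 0 < b1*(b0-c2)^2 := by nlinarith
  rcases mul_eq_zero.mp key with h | h
  · linarith
  · exfalso; linarith

lemma ncard_filter_eq {α : Type} [Fintype α] (p : α → Prop) [DecidablePred p] :
    {x | p x}.ncard = (Finset.univ.filter p).card := by
  rw [← Set.toFinset_setOf, Set.ncard_eq_toFinset_card']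

lemma sum_count {α β : Type} [Fintype α] [Fintype β] (S : α → β → Prop)
    [∀ u, DecidablePred (S u)] (T : Set α) (k : ℕ)
    (hT : ∀ u ∈ T, {z | S u z}.ncard = k) (hT' : ∀ u z, S u z → u ∈ T) :
    (∑ u : α, ∑ z : β, if S u z then 1 else 0) = T.ncard * k := by
  classical
  have h1 : ∀ u : α, (∑ z : β, if S u z then 1 else 0) = {z | S u z}.ncard := by
    intro u
    rw [ncard_filter_eq, Finset.card_filter]
  calc (∑ u : α, ∑ z : β, if S u z then 1 else 0)
      = ∑ u ∈ T.toFinset, {z | S u z}.ncard := by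
        rw [← Finset.sum_subset (Finset.subset_univ T.toFinset)]
        · exact Finset.sum_congr rfl fun u _ => h1 u
        · intro u _ hu
          rw [h1 u]
          have : {z | S u z} = ∅ := by
            ext z; simp only [Set.mem_setOf_eq, Set.mem_empty_iff_false, iff_false]
            exact fun h => hu (by simpa using hT' u z h)
          simp [this]
    _ = ∑ u ∈ T.toFinset, k := Finset.sum_congr rfl fun u hu => hT u (by simpa using hu)
    _ = T.ncard * k := by
        rw [Finset.sum_const, smul_eq_mul, Set.ncard_eq_toFinset_card']

lemma swap_count {α β : Type} [Fintype α] [Fintype β] (R : α → β → Prop)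
    (A : Set α) (B : Set β) (f g : ℕ)
    (hA : ∀ u ∈ A, {z | R u z}.ncard = f)
    (hB : ∀ z ∈ B, {u | R u z}.ncard = g)
    (hA' : ∀ u z, R u z → u ∈ A) (hB' : ∀ u z, R u z → z ∈ B) :
    A.ncard * f = B.ncard * g := by
  classical
  rw [← sum_count R A f hA hA', ← sum_count (fun z u => R u z) B g hB (fun z u h => hB' u z h)]
  rw [Finset.sum_comm]

namespace DBRG

variable {V : Type} [Fintype V] (Γ : DBRG V)

lemma mem_Y'_iff (v : V) : v ∈ Γ.Y' ↔ v ∉ Γ.Y := by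
  have h1 := Γ.cover v
  have h2 := Γ.disj v
  tauto

lemma walk_parity : ∀ {u v : V} (p : Γ.G.Walk u v), Even p.length ↔ (u ∈ Γ.Y ↔ v ∈ Γ.Y) := by
  intro u v p
  induction p with
  | nil => simp
  | @cons a b c h p ih =>
    have hab : a ∈ Γ.Y ↔ b ∉ Γ.Y := by
      rw [← mem_Y'_iff]
      exact Γ.bip a b h
    simp only [SimpleGraph.Walk.length_cons, Nat.even_add_one]
    rw [ih]
    tauto

lemma dist_parity (u v : V) : Even (Γ.G.dist u v) ↔ (u ∈ Γ.Y ↔ v ∈ Γ.Y) := by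
  obtain ⟨p, hp⟩ := (Γ.conn.preconnected u v).exists_walk_length_eq_dist
  rw [← hp, walk_parity]

lemma dist_even (u v : V) (hu : u ∈ Γ.Y) (hv : v ∈ Γ.Y) : Even (Γ.G.dist u v) :=
  (Γ.dist_parity u v).mpr (by tauto)

lemma dist_even' (u v : V) (hu : u ∈ Γ.Y') (hv : v ∈ Γ.Y') : Even (Γ.G.dist u v) := by
  rw [mem_Y'_iff] at hu hv
  exact (Γ.dist_parity u v).mpr (by tauto)

lemma mem_Y_of_dist_even {u v : V} (hu : u ∈ Γ.Y) (h : Even (Γ.G.dist u v)) : v ∈ Γ.Y :=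
  ((Γ.dist_parity u v).mp h).mp hu

lemma adj_Y' {x u : V} (hx : x ∈ Γ.Y) (h : Γ.G.Adj x u) : u ∈ Γ.Y' :=
  (Γ.bip x u h).mp hx

lemma adj_Y {x u : V} (hx : x ∈ Γ.Y') (h : Γ.G.Adj x u) : u ∈ Γ.Y :=
  (Γ.bip u x h.symm).mpr hx

lemma dist_le3 (hD : Γ.D = 3) {x : V} (hx : x ∈ Γ.Y) (z : V) : Γ.G.dist x z ≤ 3 := by
  have := (Γ.eccY x hx).2 z
  omega

lemma exists_adj_dist {x z : V} {i : ℕ} (h : Γ.G.dist x z = i + 1) :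
    ∃ w, Γ.G.Adj z w ∧ Γ.G.dist x w = i := by
  obtain ⟨p, hp⟩ := (Γ.conn.preconnected x z).exists_walk_length_eq_dist
  have hzx : z ≠ x := by
    intro hzx
    rw [hzx, SimpleGraph.dist_self] at h
    omega
  obtain ⟨w, hadj, q, hq⟩ := (p.reverse).exists_eq_cons_of_ne hzx
  have hlen : q.length = i := by
    have := congrArg SimpleGraph.Walk.length hq
    simp only [SimpleGraph.Walk.length_reverse, SimpleGraph.Walk.length_cons] at this
    omega
  refine ⟨w, hadj, ?_⟩
  have h1 : Γ.G.dist x w ≤ i := by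
    have := SimpleGraph.dist_le q.reverse
    simpa [hlen] using this
  have h2 : Γ.G.dist x z ≤ Γ.G.dist x w + 1 := by
    have ht := Γ.conn.dist_triangle (u := x) (v := w) (w := z)
    have : Γ.G.dist w z = 1 := SimpleGraph.dist_eq_one_iff_adj.mpr hadj.symm
    omega
  omega

lemma adj_dist_cases {x z w : V} (h : Γ.G.Adj z w) :
    Γ.G.dist x w = Γ.G.dist x z + 1 ∨ Γ.G.dist x z = Γ.G.dist x w + 1 := by
  have h1 : Γ.G.dist x w ≤ Γ.G.dist x z + 1 := by
    have := Γ.conn.dist_triangle (u := x) (v := z) (w := w)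
    have : Γ.G.dist z w = 1 := SimpleGraph.dist_eq_one_iff_adj.mpr h
    omega
  have h2 : Γ.G.dist x z ≤ Γ.G.dist x w + 1 := by
    have := Γ.conn.dist_triangle (u := x) (v := w) (w := z)
    have : Γ.G.dist w z = 1 := SimpleGraph.dist_eq_one_iff_adj.mpr h.symm
    omega
  have hpar : Even (Γ.G.dist x z) ↔ ¬ Even (Γ.G.dist x w) := by
    rw [Γ.dist_parity x z, Γ.dist_parity x w]
    have hzw : z ∈ Γ.Y ↔ w ∉ Γ.Y := by
      rw [← mem_Y'_iff]; exact Γ.bip z w h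
    tauto
  rcases Nat.even_or_odd (Γ.G.dist x z) with he | ho
  · have : ¬ Even (Γ.G.dist x w) := hpar.mp he
    rcases Nat.even_or_odd (Γ.G.dist x w) with h' | h'
    · exact absurd h' this
    · rw [Nat.odd_iff] at h'
      rw [Nat.even_iff] at he
      omega
  · have : Even (Γ.G.dist x w) := by
      by_contra hc
      exact (Nat.not_even_iff_odd.mpr ho) (hpar.mpr hc)
    rw [Nat.odd_iff] at ho
    rw [Nat.even_iff] at this
    omega

end DBRG

namespace DBRG

variable {V : Type} [Fintype V] (Γ : DBRG V)

lemma deg_Y {z : V} (hz : z ∈ Γ.Y) : {w | Γ.G.Adj z w}.ncard = Γ.b 0 := by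
  have h := Γ.hb 0 z hz z (SimpleGraph.dist_self)
  rw [← h]
  congr 1
  ext w
  simp only [Set.mem_setOf_eq, zero_add]
  constructor
  · intro hw; exact ⟨hw, SimpleGraph.dist_eq_one_iff_adj.mpr hw⟩
  · intro hw; exact hw.1

lemma deg_Y' {z : V} (hz : z ∈ Γ.Y') : {w | Γ.G.Adj z w}.ncard = Γ.b' 0 := by
  have h := Γ.hb' 0 z hz z (SimpleGraph.dist_self)
  rw [← h]
  congr 1
  ext w
  simp only [Set.mem_setOf_eq, zero_add]
  constructor
  · intro hw; exact ⟨hw, SimpleGraph.dist_eq_one_iff_adj.mpr hw⟩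
  · intro hw; exact hw.1

lemma dist_zero_iff {x w : V} : Γ.G.dist x w = 0 ↔ w = x := by
  rw [Γ.conn.dist_eq_zero_iff]
  exact eq_comm

/-- degree split: for `x ∈ Y` and `z` at distance `i ≥ 1`,  `deg z = c i + b i`. -/
lemma deg_split {x z : V} (hx : x ∈ Γ.Y) {i : ℕ} (hi : 1 ≤ i) (hz : Γ.G.dist x z = i) :
    {w | Γ.G.Adj z w}.ncard = Γ.c i + Γ.b i := by
  have hsplit : {w | Γ.G.Adj z w} =
      {w | Γ.G.Adj z w ∧ Γ.G.dist x w = i - 1} ∪ {w | Γ.G.Adj z w ∧ Γ.G.dist x w = i + 1} := by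
    ext w
    simp only [Set.mem_setOf_eq, Set.mem_union]
    constructor
    · intro hw
      rcases Γ.adj_dist_cases (x := x) hw with h | h
      · right; exact ⟨hw, by omega⟩
      · left; exact ⟨hw, by omega⟩
    · rintro (⟨hw, _⟩ | ⟨hw, _⟩) <;> exact hw
  rw [hsplit, Set.ncard_union_eq ?_ (Set.toFinite _) (Set.toFinite _),
    Γ.hc i hi x hx z hz, Γ.hb i x hx z hz]
  rw [Set.disjoint_left]
  rintro w ⟨-, h1⟩ ⟨-, h2⟩
  omega

lemma CN_Y {x z : V} (hx : x ∈ Γ.Y) (hz : Γ.G.dist x z = 2) :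
    {u | Γ.G.Adj x u ∧ Γ.G.Adj z u}.ncard = Γ.c 2 := by
  have h := Γ.hc 2 (by norm_num) x hx z hz
  rw [← h]
  congr 1
  ext u
  simp only [Set.mem_setOf_eq]
  constructor
  · rintro ⟨h1, h2⟩; exact ⟨h2, SimpleGraph.dist_eq_one_iff_adj.mpr h1⟩
  · rintro ⟨h1, h2⟩; exact ⟨SimpleGraph.dist_eq_one_iff_adj.mp h2, h1⟩

lemma dist_two_Y' {u v x : V} (hu : u ∈ Γ.Y') (hv : v ∈ Γ.Y') (huv : u ≠ v)
    (h1 : Γ.G.Adj x u) (h2 : Γ.G.Adj x v) : Γ.G.dist u v = 2 := by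
  have hle : Γ.G.dist u v ≤ 2 := by
    have t := Γ.conn.dist_triangle (u := u) (v := x) (w := v)
    have d1 : Γ.G.dist u x = 1 := SimpleGraph.dist_eq_one_iff_adj.mpr h1.symm
    have d2 : Γ.G.dist x v = 1 := SimpleGraph.dist_eq_one_iff_adj.mpr h2
    omega
  have hne : Γ.G.dist u v ≠ 0 := by
    rw [Ne, Γ.dist_zero_iff]
    exact fun h => huv h.symm
  have hev := Γ.dist_even' u v hu hv
  rcases hev with ⟨k, hk⟩
  omega

lemma CN_Y' {u v : V} (hu : u ∈ Γ.Y') (huv : Γ.G.dist u v = 2) :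
    {w | Γ.G.Adj u w ∧ Γ.G.Adj v w}.ncard = Γ.c' 2 := by
  have h := Γ.hc' 2 (by norm_num) u hu v huv
  rw [← h]
  congr 1
  ext w
  simp only [Set.mem_setOf_eq]
  constructor
  · rintro ⟨h1, h2⟩; exact ⟨h2, SimpleGraph.dist_eq_one_iff_adj.mpr h1⟩
  · rintro ⟨h1, h2⟩; exact ⟨SimpleGraph.dist_eq_one_iff_adj.mp h2, h1⟩

lemma CN3 (hD : Γ.D = 3) {γ : ℕ → ℕ} (hhom : Γ.TwoYHom γ) {x y z : V} (hx : x ∈ Γ.Y)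
    (hxy : Γ.G.dist x y = 2) (hxz : Γ.G.dist x z = 2) (hyz : Γ.G.dist y z = 2) :
    {w | Γ.G.Adj x w ∧ Γ.G.Adj y w ∧ Γ.G.Adj z w}.ncard = γ 2 := by
  have h := hhom 2 (by norm_num) (by rw [hD]) x hx y hxy z hxz hyz
  rw [← h]
  congr 1
  ext w
  simp only [Set.mem_setOf_eq]
  constructor
  · rintro ⟨h1, h2, h3⟩; exact ⟨SimpleGraph.dist_eq_one_iff_adj.mpr h3, h1, h2⟩
  · rintro ⟨h1, h2, h3⟩; exact ⟨h2, h3, SimpleGraph.dist_eq_one_iff_adj.mp h1⟩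

lemma offDiag_ncard (S : Set V) :
    {p : V × V | p.1 ∈ S ∧ p.2 ∈ S ∧ p.1 ≠ p.2}.ncard + S.ncard = S.ncard * S.ncard := by
  classical
  have : {p : V × V | p.1 ∈ S ∧ p.2 ∈ S ∧ p.1 ≠ p.2} = ↑(S.toFinset.offDiag) := by
    ext p
    simp [Finset.mem_offDiag]
  rw [this, Set.ncard_coe_finset, Finset.offDiag_card]
  rw [Set.ncard_eq_toFinset_card']
  have hle : S.toFinset.card ≤ S.toFinset.card * S.toFinset.card := by nlinarith
  omega

end DBRG

namespace DBRG

variable {V : Type} [Fintype V] (Γ : DBRG V)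

lemma dist_two_of_Y {x u z : V} (hx : x ∈ Γ.Y) (h1 : Γ.G.Adj x u) (h2 : Γ.G.Adj u z)
    (hne : z ≠ x) : Γ.G.dist x z = 2 := by
  have hu : u ∈ Γ.Y' := Γ.adj_Y' hx h1
  have hz : z ∈ Γ.Y := Γ.adj_Y hu h2
  have hev := Γ.dist_even x z hx hz
  have hle : Γ.G.dist x z ≤ 2 := by
    have t := Γ.conn.dist_triangle (u := x) (v := u) (w := z)
    have d1 : Γ.G.dist x u = 1 := SimpleGraph.dist_eq_one_iff_adj.mpr h1
    have d2 : Γ.G.dist u z = 1 := SimpleGraph.dist_eq_one_iff_adj.mpr h2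
    omega
  have hne0 : Γ.G.dist x z ≠ 0 := by
    rw [Ne, Γ.dist_zero_iff]; exact hne
  rcases hev with ⟨k, hk⟩
  omega

lemma idD {x : V} (hx : x ∈ Γ.Y) :
    Γ.b 0 * Γ.b 1 = {z | Γ.G.dist x z = 2}.ncard * Γ.c 2 := by
  have hsw := swap_count (fun u z => Γ.G.Adj x u ∧ (Γ.G.Adj u z ∧ Γ.G.dist x z = 2))
      {u | Γ.G.Adj x u} {z | Γ.G.dist x z = 2} (Γ.b 1) (Γ.c 2) ?_ ?_ ?_ ?_
  · rw [Γ.deg_Y hx] at hsw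
    exact hsw
  · intro u hu
    simp only [Set.mem_setOf_eq] at hu
    have heq : {z | Γ.G.Adj x u ∧ (Γ.G.Adj u z ∧ Γ.G.dist x z = 2)} =
        {w | Γ.G.Adj u w ∧ Γ.G.dist x w = 1 + 1} := by
      ext z; simp only [Set.mem_setOf_eq]; tauto
    rw [heq, Γ.hb 1 x hx u (SimpleGraph.dist_eq_one_iff_adj.mpr hu)]
  · intro z hz
    simp only [Set.mem_setOf_eq] at hz
    have heq : {u | Γ.G.Adj x u ∧ (Γ.G.Adj u z ∧ Γ.G.dist x z = 2)} =
        {u | Γ.G.Adj x u ∧ Γ.G.Adj z u} := by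
      ext u
      simp only [Set.mem_setOf_eq]
      constructor
      · rintro ⟨a1, a2, -⟩; exact ⟨a1, a2.symm⟩
      · rintro ⟨a1, a2⟩; exact ⟨a1, a2.symm, hz⟩
    rw [heq, Γ.CN_Y hx hz]
  · rintro u z ⟨h1, -⟩; exact h1
  · rintro u z ⟨-, -, h3⟩; exact h3

end DBRG

namespace DBRG

variable {V : Type} [Fintype V] (Γ : DBRG V)

lemma ne_of_dist_two {x y : V} (hxy : Γ.G.dist x y = 2) : y ≠ x := by
  intro h
  have h0 : Γ.G.dist x y = 0 := Γ.dist_zero_iff.mpr h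
  omega

lemma Y_of_dist_two {x y : V} (hx : x ∈ Γ.Y) (hxy : Γ.G.dist x y = 2) : y ∈ Γ.Y :=
  Γ.mem_Y_of_dist_even hx (by rw [hxy]; exact ⟨1, rfl⟩)

lemma idE (hD : Γ.D = 3) {x y : V} (hx : x ∈ Γ.Y) (hxy : Γ.G.dist x y = 2) :
    {z | Γ.G.dist x z = 2}.ncard =
      {z | Γ.G.dist x z = 2 ∧ Γ.G.dist y z = 2}.ncard + 1 := by
  have hy : y ∈ Γ.Y := Γ.Y_of_dist_two hx hxy
  have hset : {z | Γ.G.dist x z = 2} =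
      insert y {z | Γ.G.dist x z = 2 ∧ Γ.G.dist y z = 2} := by
    ext z
    simp only [Set.mem_setOf_eq, Set.mem_insert_iff]
    constructor
    · intro hz
      by_cases hzy : z = y
      · left; exact hzy
      · right
        refine ⟨hz, ?_⟩
        have hzY : z ∈ Γ.Y := Γ.Y_of_dist_two hx hz
        have hev := Γ.dist_even y z hy hzY
        have hle := Γ.dist_le3 hD hy z
        have hne0 : Γ.G.dist y z ≠ 0 := by
          rw [Ne, Γ.dist_zero_iff]; exact hzy
        rcases hev with ⟨k, hk⟩
        omega
    · rintro (rfl | ⟨h, -⟩)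
      · exact hxy
      · exact h
  rw [hset, Set.ncard_insert_of_notMem ?_ (Set.toFinite _)]
  simp only [Set.mem_setOf_eq, not_and]
  intro h
  rw [SimpleGraph.dist_self]
  omega

lemma idA (hD : Γ.D = 3) {γ : ℕ → ℕ} (hhom : Γ.TwoYHom γ) (hb' : Γ.b' 0 = 1 + Γ.b 1)
    {x y : V} (hx : x ∈ Γ.Y) (hxy : Γ.G.dist x y = 2) :
    Γ.c 2 * (Γ.b 1 - 1) =
      {z | Γ.G.dist x z = 2 ∧ Γ.G.dist y z = 2}.ncard * γ 2 := by
  have hy : y ∈ Γ.Y := Γ.Y_of_dist_two hx hxy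
  have hyx : y ≠ x := Γ.ne_of_dist_two hxy
  have hsw := swap_count
      (fun u z => (Γ.G.Adj x u ∧ Γ.G.Adj y u) ∧ (Γ.G.Adj u z ∧ z ≠ x ∧ z ≠ y))
      {u | Γ.G.Adj x u ∧ Γ.G.Adj y u} {z | Γ.G.dist x z = 2 ∧ Γ.G.dist y z = 2}
      (Γ.b 1 - 1) (γ 2) ?_ ?_ ?_ ?_
  · rw [Γ.CN_Y hx hxy] at hsw
    exact hsw
  · intro u hu
    simp only [Set.mem_setOf_eq] at hu
    have heq : {z | (Γ.G.Adj x u ∧ Γ.G.Adj y u) ∧ (Γ.G.Adj u z ∧ z ≠ x ∧ z ≠ y)} =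
        {w | Γ.G.Adj u w} \ {x, y} := by
      ext z
      simp only [Set.mem_setOf_eq, Set.mem_diff, Set.mem_insert_iff, Set.mem_singleton_iff]
      tauto
    rw [heq]
    have hsub : ({x, y} : Set V) ⊆ {w | Γ.G.Adj u w} := by
      rintro w (rfl | rfl)
      · exact hu.1.symm
      · exact hu.2.symm
    have hcard := Set.ncard_diff_add_ncard_of_subset hsub (Set.toFinite _)
    rw [Set.ncard_pair (fun h => hyx h.symm)] at hcard
    have hdeg : {w | Γ.G.Adj u w}.ncard = Γ.b' 0 := Γ.deg_Y' (Γ.adj_Y' hx hu.1)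
    omega
  · intro z hz
    simp only [Set.mem_setOf_eq] at hz
    have hzx : z ≠ x := Γ.ne_of_dist_two hz.1
    have hzy : z ≠ y := Γ.ne_of_dist_two hz.2
    have heq : {u | (Γ.G.Adj x u ∧ Γ.G.Adj y u) ∧ (Γ.G.Adj u z ∧ z ≠ x ∧ z ≠ y)} =
        {w | Γ.G.Adj x w ∧ Γ.G.Adj y w ∧ Γ.G.Adj z w} := by
      ext u
      simp only [Set.mem_setOf_eq]
      constructor
      · rintro ⟨⟨a1, a2⟩, a3, -⟩; exact ⟨a1, a2, a3.symm⟩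
      · rintro ⟨a1, a2, a3⟩; exact ⟨⟨a1, a2⟩, a3.symm, hzx, hzy⟩
    rw [heq, Γ.CN3 hD hhom hx hxy hz.1 hz.2]
  · rintro u z ⟨h1, -⟩; exact h1
  · rintro u z ⟨⟨a1, a2⟩, a3, a4, a5⟩
    exact ⟨Γ.dist_two_of_Y hx a1 a3 a4, Γ.dist_two_of_Y hy a2 a3 a5⟩

lemma c'2_ge_two (h2 : 2 ≤ Γ.c 2) {x y : V} (hx : x ∈ Γ.Y) (hxy : Γ.G.dist x y = 2) :
    2 ≤ Γ.c' 2 := by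
  have hyx : y ≠ x := Γ.ne_of_dist_two hxy
  have hCN := Γ.CN_Y hx hxy
  have hlt : 1 < {u | Γ.G.Adj x u ∧ Γ.G.Adj y u}.ncard := by omega
  obtain ⟨u, v, hu, hv, huv⟩ := (Set.one_lt_ncard_iff (Set.toFinite _)).mp hlt
  simp only [Set.mem_setOf_eq] at hu hv
  have hu' : u ∈ Γ.Y' := Γ.adj_Y' hx hu.1
  have hv' : v ∈ Γ.Y' := Γ.adj_Y' hx hv.1
  have hduv : Γ.G.dist u v = 2 := Γ.dist_two_Y' hu' hv' huv hu.1 hv.1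
  have hc' := Γ.CN_Y' hu' hduv
  have hsub : ({x, y} : Set V) ⊆ {w | Γ.G.Adj u w ∧ Γ.G.Adj v w} := by
    rintro w (rfl | rfl)
    · exact ⟨hu.1.symm, hv.1.symm⟩
    · exact ⟨hu.2.symm, hv.2.symm⟩
  have hle := Set.ncard_le_ncard hsub (Set.toFinite _)
  rw [Set.ncard_pair (fun h => hyx h.symm)] at hle
  omega

lemma idB (hD : Γ.D = 3) {γ : ℕ → ℕ} (hhom : Γ.TwoYHom γ)
    {x y : V} (hx : x ∈ Γ.Y) (hxy : Γ.G.dist x y = 2) :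
    (Γ.c 2 * Γ.c 2 - Γ.c 2) * (Γ.c' 2 - 2) =
      {z | Γ.G.dist x z = 2 ∧ Γ.G.dist y z = 2}.ncard * (γ 2 * γ 2 - γ 2) := by
  have hy : y ∈ Γ.Y := Γ.Y_of_dist_two hx hxy
  have hyx : y ≠ x := Γ.ne_of_dist_two hxy
  have hsw := swap_count
      (fun (p : V × V) z =>
        ((Γ.G.Adj x p.1 ∧ Γ.G.Adj y p.1) ∧ (Γ.G.Adj x p.2 ∧ Γ.G.Adj y p.2) ∧ p.1 ≠ p.2) ∧
          (Γ.G.Adj p.1 z ∧ Γ.G.Adj p.2 z ∧ z ≠ x ∧ z ≠ y))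
      {p : V × V | p.1 ∈ {u | Γ.G.Adj x u ∧ Γ.G.Adj y u} ∧
          p.2 ∈ {u | Γ.G.Adj x u ∧ Γ.G.Adj y u} ∧ p.1 ≠ p.2}
      {z | Γ.G.dist x z = 2 ∧ Γ.G.dist y z = 2}
      (Γ.c' 2 - 2) (γ 2 * γ 2 - γ 2) ?_ ?_ ?_ ?_
  · have hoff := offDiag_ncard (V := V) {u | Γ.G.Adj x u ∧ Γ.G.Adj y u}
    rw [Γ.CN_Y hx hxy] at hoff
    have : {p : V × V | p.1 ∈ {u | Γ.G.Adj x u ∧ Γ.G.Adj y u} ∧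
        p.2 ∈ {u | Γ.G.Adj x u ∧ Γ.G.Adj y u} ∧ p.1 ≠ p.2}.ncard =
        Γ.c 2 * Γ.c 2 - Γ.c 2 := by omega
    rw [this] at hsw
    exact hsw
  · rintro ⟨u, v⟩ hp
    simp only [Set.mem_setOf_eq] at hp
    obtain ⟨hu, hv, huv⟩ := hp
    have heq : {z | ((Γ.G.Adj x u ∧ Γ.G.Adj y u) ∧ (Γ.G.Adj x v ∧ Γ.G.Adj y v) ∧ u ≠ v) ∧
        (Γ.G.Adj u z ∧ Γ.G.Adj v z ∧ z ≠ x ∧ z ≠ y)} =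
        {w | Γ.G.Adj u w ∧ Γ.G.Adj v w} \ {x, y} := by
      ext z
      simp only [Set.mem_setOf_eq, Set.mem_diff, Set.mem_insert_iff, Set.mem_singleton_iff]
      tauto
    rw [heq]
    have hu' : u ∈ Γ.Y' := Γ.adj_Y' hx hu.1
    have hv' : v ∈ Γ.Y' := Γ.adj_Y' hx hv.1
    have hduv : Γ.G.dist u v = 2 := Γ.dist_two_Y' hu' hv' huv hu.1 hv.1
    have hc' := Γ.CN_Y' hu' hduv
    have hsub : ({x, y} : Set V) ⊆ {w | Γ.G.Adj u w ∧ Γ.G.Adj v w} := by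
      rintro w (rfl | rfl)
      · exact ⟨hu.1.symm, hv.1.symm⟩
      · exact ⟨hu.2.symm, hv.2.symm⟩
    have hcard := Set.ncard_diff_add_ncard_of_subset hsub (Set.toFinite _)
    rw [Set.ncard_pair (fun h => hyx h.symm)] at hcard
    omega
  · intro z hz
    simp only [Set.mem_setOf_eq] at hz
    have hzx : z ≠ x := Γ.ne_of_dist_two hz.1
    have hzy : z ≠ y := Γ.ne_of_dist_two hz.2
    have heq : {p : V × V |
        ((Γ.G.Adj x p.1 ∧ Γ.G.Adj y p.1) ∧ (Γ.G.Adj x p.2 ∧ Γ.G.Adj y p.2) ∧ p.1 ≠ p.2) ∧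
          (Γ.G.Adj p.1 z ∧ Γ.G.Adj p.2 z ∧ z ≠ x ∧ z ≠ y)} =
        {p : V × V | p.1 ∈ {w | Γ.G.Adj x w ∧ Γ.G.Adj y w ∧ Γ.G.Adj z w} ∧
          p.2 ∈ {w | Γ.G.Adj x w ∧ Γ.G.Adj y w ∧ Γ.G.Adj z w} ∧ p.1 ≠ p.2} := by
      ext p
      simp only [Set.mem_setOf_eq]
      constructor
      · rintro ⟨⟨⟨a1, a2⟩, ⟨a3, a4⟩, a5⟩, a6, a7, -⟩
        exact ⟨⟨a1, a2, a6.symm⟩, ⟨a3, a4, a7.symm⟩, a5⟩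
      · rintro ⟨⟨a1, a2, a3⟩, ⟨a4, a5, a6⟩, a7⟩
        exact ⟨⟨⟨a1, a2⟩, ⟨a4, a5⟩, a7⟩, a3.symm, a6.symm, hzx, hzy⟩
    rw [heq]
    have hoff := offDiag_ncard (V := V) {w | Γ.G.Adj x w ∧ Γ.G.Adj y w ∧ Γ.G.Adj z w}
    rw [Γ.CN3 hD hhom hx hxy hz.1 hz.2] at hoff
    omega
  · rintro p z ⟨h1, -⟩
    exact h1
  · rintro p z ⟨⟨⟨a1, a2⟩, ⟨a3, a4⟩, -⟩, a6, a7, a8, a9⟩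
    exact ⟨Γ.dist_two_of_Y hx a1 a6 a8, Γ.dist_two_of_Y hy a2 a6 a9⟩

lemma idC {x : V} (hx : x ∈ Γ.Y) :
    (Γ.b 0 * Γ.b 0 - Γ.b 0) * (Γ.c' 2 - 1) =
      {z | Γ.G.dist x z = 2}.ncard * (Γ.c 2 * Γ.c 2 - Γ.c 2) := by
  have hsw := swap_count
      (fun (p : V × V) z =>
        (Γ.G.Adj x p.1 ∧ Γ.G.Adj x p.2 ∧ p.1 ≠ p.2) ∧
          (Γ.G.Adj p.1 z ∧ Γ.G.Adj p.2 z ∧ z ≠ x))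
      {p : V × V | p.1 ∈ {u | Γ.G.Adj x u} ∧ p.2 ∈ {u | Γ.G.Adj x u} ∧ p.1 ≠ p.2}
      {z | Γ.G.dist x z = 2}
      (Γ.c' 2 - 1) (Γ.c 2 * Γ.c 2 - Γ.c 2) ?_ ?_ ?_ ?_
  · have hoff := offDiag_ncard (V := V) {u | Γ.G.Adj x u}
    rw [Γ.deg_Y hx] at hoff
    have : {p : V × V | p.1 ∈ {u | Γ.G.Adj x u} ∧ p.2 ∈ {u | Γ.G.Adj x u} ∧ p.1 ≠ p.2}.ncard =
        Γ.b 0 * Γ.b 0 - Γ.b 0 := by omega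
    rw [this] at hsw
    exact hsw
  · rintro ⟨u, v⟩ hp
    simp only [Set.mem_setOf_eq] at hp
    obtain ⟨hu, hv, huv⟩ := hp
    have heq : {z | (Γ.G.Adj x u ∧ Γ.G.Adj x v ∧ u ≠ v) ∧
        (Γ.G.Adj u z ∧ Γ.G.Adj v z ∧ z ≠ x)} =
        {w | Γ.G.Adj u w ∧ Γ.G.Adj v w} \ {x} := by
      ext z
      simp only [Set.mem_setOf_eq, Set.mem_diff, Set.mem_singleton_iff]
      tauto
    rw [heq]
    have hu' : u ∈ Γ.Y' := Γ.adj_Y' hx hu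
    have hv' : v ∈ Γ.Y' := Γ.adj_Y' hx hv
    have hduv : Γ.G.dist u v = 2 := Γ.dist_two_Y' hu' hv' huv hu hv
    have hc' := Γ.CN_Y' hu' hduv
    have hsub : ({x} : Set V) ⊆ {w | Γ.G.Adj u w ∧ Γ.G.Adj v w} := by
      rintro w rfl
      exact ⟨hu.symm, hv.symm⟩
    have hcard := Set.ncard_diff_add_ncard_of_subset hsub (Set.toFinite _)
    rw [Set.ncard_singleton] at hcard
    omega
  · intro z hz
    simp only [Set.mem_setOf_eq] at hz
    have hzx : z ≠ x := Γ.ne_of_dist_two hz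
    have heq : {p : V × V | (Γ.G.Adj x p.1 ∧ Γ.G.Adj x p.2 ∧ p.1 ≠ p.2) ∧
          (Γ.G.Adj p.1 z ∧ Γ.G.Adj p.2 z ∧ z ≠ x)} =
        {p : V × V | p.1 ∈ {u | Γ.G.Adj x u ∧ Γ.G.Adj z u} ∧
          p.2 ∈ {u | Γ.G.Adj x u ∧ Γ.G.Adj z u} ∧ p.1 ≠ p.2} := by
      ext p
      simp only [Set.mem_setOf_eq]
      constructor
      · rintro ⟨⟨a1, a2, a3⟩, a4, a5, -⟩
        exact ⟨⟨a1, a4.symm⟩, ⟨a2, a5.symm⟩, a3⟩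
      · rintro ⟨⟨a1, a2⟩, ⟨a3, a4⟩, a5⟩
        exact ⟨⟨a1, a3, a5⟩, a2.symm, a4.symm, hzx⟩
    rw [heq]
    have hoff := offDiag_ncard (V := V) {u | Γ.G.Adj x u ∧ Γ.G.Adj z u}
    rw [Γ.CN_Y hx hz] at hoff
    omega
  · rintro p z ⟨h1, -⟩
    exact h1
  · rintro p z ⟨⟨a1, a2, -⟩, a4, a5, a6⟩
    exact Γ.dist_two_of_Y hx a1 a4 a6

end DBRG

namespace DBRG

variable {V : Type} [Fintype V] (Γ : DBRG V)

lemma params (hD : Γ.D = 3) :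
    Γ.b' 0 = 1 + Γ.b 1 ∧ Γ.b 0 = Γ.c 2 + Γ.b 2 ∧ 1 ≤ Γ.b 2 ∧ 1 ≤ Γ.c 2 := by
  obtain ⟨x, hx⟩ := Γ.Yne
  obtain ⟨w, hw⟩ := (Γ.eccY x hx).1
  rw [hD] at hw
  obtain ⟨z2, hz2adj, hz2⟩ := Γ.exists_adj_dist (show Γ.G.dist x w = 2 + 1 by omega)
  obtain ⟨u, huadj, hu1⟩ := Γ.exists_adj_dist (show Γ.G.dist x z2 = 1 + 1 by omega)
  have hz2Y : z2 ∈ Γ.Y := Γ.Y_of_dist_two hx hz2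
  have hb2 : 1 ≤ Γ.b 2 := by
    have hcount := Γ.hb 2 x hx z2 hz2
    have hmem : w ∈ {w' | Γ.G.Adj z2 w' ∧ Γ.G.dist x w' = 2 + 1} := ⟨hz2adj.symm, by omega⟩
    have := (Set.ncard_pos (Set.toFinite _)).mpr ⟨w, hmem⟩
    omega
  have hc2 : 1 ≤ Γ.c 2 := by
    have hcount := Γ.hc 2 (by norm_num) x hx z2 hz2
    have hmem : u ∈ {w' | Γ.G.Adj z2 w' ∧ Γ.G.dist x w' = 2 - 1} := ⟨huadj, by omega⟩
    have := (Set.ncard_pos (Set.toFinite _)).mpr ⟨u, hmem⟩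
    omega
  have hsplit : Γ.b 0 = Γ.c 2 + Γ.b 2 := by
    have h1 := Γ.deg_split hx (i := 2) (by norm_num) hz2
    have h2 := Γ.deg_Y hz2Y
    omega
  have hadjxu : Γ.G.Adj x u := SimpleGraph.dist_eq_one_iff_adj.mp hu1
  have huY' : u ∈ Γ.Y' := Γ.adj_Y' hx hadjxu
  have hb'0 : Γ.b' 0 = 1 + Γ.b 1 := by
    have hunion : {w | Γ.G.Adj u w} =
        {w | Γ.G.Adj u w ∧ Γ.G.dist x w = 0} ∪ {w | Γ.G.Adj u w ∧ Γ.G.dist x w = 1 + 1} := by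
      ext w'
      simp only [Set.mem_setOf_eq, Set.mem_union]
      constructor
      · intro hw'
        rcases Γ.adj_dist_cases (x := x) hw' with h | h
        · right; exact ⟨hw', by omega⟩
        · left; exact ⟨hw', by omega⟩
      · rintro (⟨h, -⟩ | ⟨h, -⟩) <;> exact h
    have hsing : {w | Γ.G.Adj u w ∧ Γ.G.dist x w = 0} = {x} := by
      ext w'
      simp only [Set.mem_setOf_eq, Set.mem_singleton_iff]
      constructor
      · rintro ⟨-, h⟩; exact Γ.dist_zero_iff.mp h
      · rintro rfl; exact ⟨hadjxu.symm, SimpleGraph.dist_self⟩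
    have hdeg := Γ.deg_Y' huY'
    rw [hunion, Set.ncard_union_eq ?_ (Set.toFinite _) (Set.toFinite _), hsing,
      Set.ncard_singleton, Γ.hb 1 x hx u hu1] at hdeg
    · omega
    · rw [Set.disjoint_left]
      rintro w' ⟨-, h1⟩ ⟨-, h2⟩
      omega
  exact ⟨hb'0, hsplit, hb2, hc2⟩

end DBRG

set_option maxHeartbeats 1600000 in
theorem stmt_19 {V : Type} [Fintype V] (Γ : DBRG V) (hk' : 3 ≤ Γ.b' 0) (hD : Γ.D = 3)
    (γ : ℕ → ℕ) (hhom : Γ.TwoYHom γ) :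
    Γ.b 1 = Γ.c 2 ∧
      ∀ x ∈ Γ.Y, {y | Γ.G.dist x y = 2}.ncard = {y | Γ.G.Adj x y}.ncard := by
  obtain ⟨hb'0, hb0split, hb2, hc2⟩ := Γ.params hD
  have hb1 : 2 ≤ Γ.b 1 := by omega
  have hb0 : Γ.c 2 + 1 ≤ Γ.b 0 := by omega
  obtain ⟨x, hx⟩ := Γ.Yne
  obtain ⟨w, hw⟩ := (Γ.eccY x hx).1
  rw [hD] at hw
  obtain ⟨y, -, hy2⟩ := Γ.exists_adj_dist (show Γ.G.dist x w = 2 + 1 by omega)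
  set q := {z | Γ.G.dist x z = 2 ∧ Γ.G.dist y z = 2}.ncard with hq
  have hidA := Γ.idA hD hhom hb'0 hx hy2
  have hidB := Γ.idB hD hhom hx hy2
  have hidC := Γ.idC hx
  have hidD := Γ.idD hx
  have hidE := Γ.idE hD hx hy2
  rw [← hq] at hidA hidB hidE
  have hprod : 1 ≤ q * γ 2 := by
    rw [← hidA]
    exact Nat.mul_pos hc2 (by omega)
  have hqpos : 1 ≤ q := by
    by_contra h
    have : q = 0 := by omega
    rw [this, zero_mul] at hprod
    omega
  have hγpos : 1 ≤ γ 2 := by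
    by_contra h
    have : γ 2 = 0 := by omega
    rw [this, mul_zero] at hprod
    omega
  have hmain : Γ.b 1 = Γ.c 2 := by
    by_cases hc2two : 2 ≤ Γ.c 2
    · have he2 : 2 ≤ Γ.c' 2 := Γ.c'2_ge_two hc2two hx hy2
      have e1 : Γ.c 2 ≤ Γ.c 2 * Γ.c 2 := Nat.le_mul_of_pos_left _ (by omega)
      have e2 : γ 2 ≤ γ 2 * γ 2 := Nat.le_mul_of_pos_left _ (by omega)
      have e3 : Γ.b 0 ≤ Γ.b 0 * Γ.b 0 := Nat.le_mul_of_pos_left _ (by omega)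
      rw [hidE] at hidC hidD
      have h1 : (q : ℤ) * (γ 2) = (Γ.c 2) * ((Γ.b 1) - 1) := by
        zify [show 1 ≤ Γ.b 1 by omega] at hidA
        linarith
      have h2 : (q : ℤ) * ((γ 2) * ((γ 2) - 1)) = ((Γ.c 2) * ((Γ.c 2) - 1)) * ((Γ.c' 2) - 2) := by
        zify [e1, e2, he2] at hidB
        linear_combination -hidB
      have h3 : ((Γ.b 0 : ℤ) * (Γ.b 0) - (Γ.b 0)) * ((Γ.c' 2) - 1) =
          ((q : ℤ) + 1) * ((Γ.c 2) * (Γ.c 2) - (Γ.c 2)) := by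
        zify [e1, e3, show 1 ≤ Γ.c' 2 by omega] at hidC
        linear_combination hidC
      have h4 : (Γ.c 2 : ℤ) * ((q : ℤ) + 1) = (Γ.b 0) * (Γ.b 1) := by
        zify at hidD
        linarith
      have := key_alg (Γ.b 0) (Γ.b 1) (Γ.c 2) (Γ.c' 2) q (γ 2) h1 h2 h3 h4
        (by exact_mod_cast hb1) (by exact_mod_cast hc2) (by exact_mod_cast hb0)
      exact_mod_cast this
    · exfalso
      have hc21 : Γ.c 2 = 1 := by omega
      rw [hc21] at hidA hidB
      simp only [one_mul, mul_one] at hidA hidB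
      -- hidB : (1 - 1) * (c'2 - 2) = q * (γ2*γ2 - γ2)
      have hz : q * (γ 2 * γ 2 - γ 2) = 0 := by omega
      have hγ1 : γ 2 = 1 := by
        rcases Nat.mul_eq_zero.mp hz with h | h
        · omega
        · have hle := Nat.sub_eq_zero_iff_le.mp h
          nlinarith
      rw [hγ1, mul_one] at hidA
      rw [hidE] at hidD
      rw [hc21, mul_one] at hidD
      have hq1 : q + 1 = Γ.b 1 := by omega
      rw [hq1] at hidD
      nlinarith
  refine ⟨hmain, ?_⟩
  intro x' hx'
  have hD' := Γ.idD hx'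
  rw [hmain] at hD'
  have hn : {z | Γ.G.dist x' z = 2}.ncard = Γ.b 0 :=
    Nat.eq_of_mul_eq_mul_right (show 0 < Γ.c 2 by omega) hD'.symm
  rw [hn, Γ.deg_Y hx']
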